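/- arXiv:2603.16626 — 3 statements merged into one kernel-verified Lean document; each statement's English description precedes it below -/
import Mathlib

section
/- Let v : ℝ≥0 → ℝ be a differentiable function satisfying v'(t) = -(1/m)·μ(v(t))·v(t) + φ(t), where m > 0, μ(x) ≥ μ₀ > 0 for all x ≠ 0 (and the product μ(v)·v is continuous with μ(0)·0 = 0), and |φ(t)| ≤ φ̄·e^{-λt} for constants φ̄ > 0, λ > 0. Then v(t) → 0 as t → ∞. -/
open Real Filter
open Topology

/-- Sway stability under exponentially decaying disturbance: if
v' = -(1/m)·μ(v)·v + φ, with μ bounded below away from zero, μ(v)·v continuous,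
and |φ(t)| ≤ φ̄·e^{-λt}, then v(t) → 0 as t → ∞. -/
theorem sway_tendsto_zero (m μ₀ φbar lam : ℝ) (hm : 0 < m) (hμ₀ : 0 < μ₀)
    (hφbar : 0 < φbar) (hlam : 0 < lam)
    (μ : ℝ → ℝ) (hμ : ∀ x : ℝ, x ≠ 0 → μ₀ ≤ μ x)
    (hμcont : Continuous fun x => μ x * x) (hμzero : μ 0 * 0 = 0)
    (v φ : ℝ → ℝ) (hv : Differentiable ℝ v)
    (hode : ∀ t : ℝ, 0 ≤ t → deriv v t = -(1 / m) * μ (v t) * v t + φ t)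
    (hφ : ∀ t : ℝ, 0 ≤ t → |φ t| ≤ φbar * Real.exp (-lam * t)) :
    Tendsto v atTop (nhds 0) := by
  set c : ℝ := μ₀ / m with hc
  have hcpos : 0 < c := div_pos hμ₀ hm
  -- Grönwall from time T
  have key : ∀ T : ℝ, 0 ≤ T → ∀ t : ℝ, T ≤ t →
      |v t| ≤ gronwallBound |v T| (-c) (φbar * Real.exp (-lam * T)) (t - T) := by
    intro T hT t ht
    have := le_gronwallBound_of_liminf_deriv_right_le
      (f := fun s => |v s|) (f' := fun s => -c * |v s| + |φ s|)
      (δ := |v T|) (K := -c) (ε := φbar * Real.exp (-lam * T)) (a := T) (b := t)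
      (hv.continuous.abs.continuousOn)
      ?_ le_rfl ?_ t ⟨ht, le_rfl⟩
    · exact this
    · -- liminf of slopes
      intro x hx r hr
      have hx0 : (0:ℝ) ≤ x := le_trans hT hx.1
      have hslope : Tendsto (slope v x) (𝓝[>] x) (𝓝 (deriv v x)) :=
        ((hasDerivAt_iff_tendsto_slope.mp (hv x).hasDerivAt).mono_left
          (nhdsWithin_mono x fun z hz => ne_of_gt hz))
      by_cases hvx : v x = 0
      · -- at a zero of v, the slope of |v| tends to |φ x| = f' x
        have hderiv : deriv v x = φ x := by
          rw [hode x hx0, hvx, mul_zero, zero_add]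
        have habs : Tendsto (fun z => |slope v x z|) (𝓝[>] x) (𝓝 |φ x|) := by
          simpa [hderiv] using hslope.abs
        have hlt : |φ x| < r := by
          have : (fun s => -c * |v s| + |φ s|) x = |φ x| := by simp [hvx]
          linarith [hr, this.symm.le]
        refine ((habs.eventually_lt_const hlt).mp ?_).frequently
        filter_upwards [self_mem_nhdsWithin] with z hz h
        have hzx : 0 < z - x := sub_pos.mpr hz
        have : (z - x)⁻¹ * (|v z| - |v x|) = |slope v x z| := by
          simp [slope_def_field, hvx, abs_div, abs_of_pos hzx, div_eq_inv_mul, abs_mul,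
            abs_of_pos (inv_pos.mpr hzx)]
        rw [this]; exact h
      · -- v x ≠ 0 : |v| is differentiable at x
        have hd : HasDerivAt (fun s => |v s|) ((SignType.sign (v x) : ℝ) * deriv v x) x :=
          (hasDerivAt_abs hvx).comp x (hv x).hasDerivAt
        have hL : (SignType.sign (v x) : ℝ) * deriv v x ≤ -c * |v x| + |φ x| := by
          rw [hode x hx0]
          have hμx : μ₀ ≤ μ (v x) := hμ _ hvx
          have hφx : φ x ≤ |φ x| := le_abs_self _
          have hφx' : -φ x ≤ |φ x| := neg_le_abs _
          have h1m : (0:ℝ) < 1 / m := by positivity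
          have hceq : c = 1 / m * μ₀ := by rw [hc]; ring
          rcases lt_or_gt_of_ne hvx with hneg | hpos
          · have hs : (SignType.sign (v x) : ℝ) = -1 := by
              rw [sign_neg hneg]; norm_num
            have key2 : 1 / m * μ₀ * (-v x) ≤ 1 / m * μ (v x) * (-v x) :=
              mul_le_mul_of_nonneg_right (mul_le_mul_of_nonneg_left hμx h1m.le)
                (by linarith)
            rw [hs, abs_of_neg hneg, hceq]
            nlinarith [key2, hφx']
          · have hs : (SignType.sign (v x) : ℝ) = 1 := by
              rw [sign_pos hpos]; norm_num
            have key2 : 1 / m * μ₀ * v x ≤ 1 / m * μ (v x) * v x :=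
              mul_le_mul_of_nonneg_right (mul_le_mul_of_nonneg_left hμx h1m.le) hpos.le
            rw [hs, abs_of_pos hpos, hceq]
            nlinarith [key2, hφx]
        have hsl : Tendsto (slope (fun s => |v s|) x) (𝓝[>] x)
            (𝓝 ((SignType.sign (v x) : ℝ) * deriv v x)) :=
          (hasDerivAt_iff_tendsto_slope.mp hd).mono_left
            (nhdsWithin_mono x fun z hz => ne_of_gt hz)
        have : ∀ᶠ z in 𝓝[>] x, slope (fun s => |v s|) x z < r :=
          hsl.eventually_lt_const (lt_of_le_of_lt hL hr)
        refine this.mp ?_ |>.frequently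
        filter_upwards [self_mem_nhdsWithin] with z hz h
        rwa [slope_def_field, div_eq_inv_mul] at h
    · -- the differential inequality bound
      intro x hx
      have hx0 : (0:ℝ) ≤ x := le_trans hT hx.1
      have : |φ x| ≤ φbar * Real.exp (-lam * T) := by
        refine (hφ x hx0).trans ?_
        have : Real.exp (-lam * x) ≤ Real.exp (-lam * T) :=
          Real.exp_le_exp.mpr (by nlinarith [hx.1])
        nlinarith
      linarith
  -- bound on the Grönwall bound
  have gb : ∀ δ ε' s : ℝ, 0 ≤ ε' → gronwallBound δ (-c) ε' s ≤ δ * Real.exp (-c * s) + ε' / c := by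
    intro δ ε' s hε'
    rw [gronwallBound_of_K_ne_0 (neg_ne_zero.mpr (ne_of_gt hcpos))]
    dsimp only
    have he : 0 < Real.exp (-c * s) := Real.exp_pos _
    have h1 : ε' / -c * (Real.exp (-c * s) - 1) = ε' / c * (1 - Real.exp (-c * s)) := by
      rw [div_neg]; ring
    rw [h1]
    have : ε' / c * (1 - Real.exp (-c * s)) ≤ ε' / c := by
      have h2 : 0 ≤ ε' / c := div_nonneg hε' hcpos.le
      nlinarith
    linarith
  -- conclusion
  rw [NormedAddCommGroup.tendsto_nhds_zero]
  intro ε hε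
  -- choose T
  have hdecay : Tendsto (fun T => φbar * Real.exp (-lam * T) / c) atTop (𝓝 0) := by
    have h1 : Tendsto (fun T : ℝ => lam * T) atTop atTop :=
      Tendsto.const_mul_atTop hlam tendsto_id
    have h2 : Tendsto (fun T : ℝ => Real.exp (-(lam * T))) atTop (𝓝 0) :=
      Real.tendsto_exp_neg_atTop_nhds_zero.comp h1
    have := (h2.const_mul φbar).div_const c
    simpa [neg_mul] using this
  obtain ⟨T, hT1, hT0⟩ := ((hdecay.eventually_lt_const (half_pos hε)).and
    (eventually_ge_atTop (0:ℝ))).exists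
  -- tail tendsto
  have htail : Tendsto (fun t => |v T| * Real.exp (-c * (t - T))) atTop (𝓝 0) := by
    have h1 : Tendsto (fun t : ℝ => c * (t - T)) atTop atTop :=
      Tendsto.const_mul_atTop hcpos (tendsto_atTop_add_const_right _ _ tendsto_id)
    have h2 : Tendsto (fun t : ℝ => Real.exp (-(c * (t - T)))) atTop (𝓝 0) :=
      Real.tendsto_exp_neg_atTop_nhds_zero.comp h1
    simpa [neg_mul] using h2.const_mul |v T|
  filter_upwards [htail.eventually_lt_const (half_pos hε), eventually_ge_atTop T] with t h1 h2
  have hb := (key T hT0 t h2).trans (gb _ _ _ (by positivity))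
  rw [Real.norm_eq_abs]
  calc |v t| ≤ |v T| * Real.exp (-c * (t - T)) + φbar * Real.exp (-lam * T) / c := hb
    _ < ε / 2 + ε / 2 := add_lt_add h1 hT1
    _ = ε := add_halves ε
end

section
/- Let V : ℝ≥0 → ℝ≥0 be differentiable and satisfy V'(t) ≤ -a·V(t) + b·√(V(t))·e^{-λt}, with a > 0, b > 0, λ > 0, and 2λ < a. Then V(t) → 0 as t → ∞. -/
open Real Filter

/-- Lyapunov differential inequality: if V ≥ 0 is differentiable and
V' ≤ -a·V + b·√V·e^{-λt} with a, b, λ > 0 and 2λ < a, then V(t) → 0. -/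
theorem lyapunov_sqrt_decay (a b lam : ℝ) (ha : 0 < a) (hb : 0 < b) (hlam : 0 < lam)
    (h2lam : 2 * lam < a) (V : ℝ → ℝ) (hVnonneg : ∀ t : ℝ, 0 ≤ V t)
    (hV : Differentiable ℝ V)
    (hineq : ∀ t : ℝ, 0 ≤ t →
      deriv V t ≤ -a * V t + b * Real.sqrt (V t) * Real.exp (-lam * t)) :
    Tendsto V atTop (nhds 0) := by
  set c : ℝ := (a + 2 * lam) / 2 with hc
  set C : ℝ := b ^ 2 / (2 * (a - 2 * lam)) with hC
  have hgap : 0 < a - 2 * lam := by linarith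
  have hcpos : 0 < c := by positivity
  have hc2 : c - 2 * lam = (a - 2 * lam) / 2 := by rw [hc]; ring
  have hc2pos : 0 < c - 2 * lam := by rw [hc2]; positivity
  have hCpos : 0 < C := by positivity
  set D : ℝ := C / (c - 2 * lam) with hD
  -- linear differential inequality via AM-GM
  have hlin : ∀ t : ℝ, 0 ≤ t → deriv V t ≤ -c * V t + C * Real.exp (-(2 * lam) * t) := by
    intro t ht
    have h1 := hineq t ht
    have hx : Real.sqrt (V t) ^ 2 = V t := Real.sq_sqrt (hVnonneg t)
    have hy : Real.exp (-(2 * lam) * t) = Real.exp (-lam * t) ^ 2 := by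
      rw [sq, ← Real.exp_add]; congr 1; ring
    have hsq := sq_nonneg ((a - 2 * lam) * Real.sqrt (V t) - b * Real.exp (-lam * t))
    have key : b * Real.sqrt (V t) * Real.exp (-lam * t) ≤
        (a - 2 * lam) / 2 * V t + C * Real.exp (-(2 * lam) * t) := by
      rw [hC, hy]
      rw [div_mul_eq_mul_div, div_mul_eq_mul_div,
        div_add_div _ _ (two_ne_zero) (by positivity : (2 * (a - 2 * lam) : ℝ) ≠ 0),
        le_div_iff₀ (by positivity)]
      have hsq2 : 2 * (a - 2 * lam) * (b * Real.sqrt (V t) * Real.exp (-lam * t)) ≤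
          (a - 2 * lam) ^ 2 * V t + b ^ 2 * Real.exp (-lam * t) ^ 2 := by
        nlinarith [hsq, hx]
      nlinarith [hsq2]
    have heq : -a * V t + (a - 2 * lam) / 2 * V t = -c * V t := by rw [hc]; ring
    linarith
  -- the comparison function
  set f : ℝ → ℝ := fun t => Real.exp (c * t) * V t - D * Real.exp ((c - 2 * lam) * t) with hf
  have hderiv : ∀ t : ℝ, HasDerivAt f
      (Real.exp (c * t) * c * V t + Real.exp (c * t) * deriv V t
        - D * (Real.exp ((c - 2 * lam) * t) * (c - 2 * lam))) t := by
    intro t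
    have h1 : HasDerivAt (fun s => Real.exp (c * s)) (Real.exp (c * t) * c) t := by
      simpa using ((hasDerivAt_id t).const_mul c).exp
    have h2 : HasDerivAt (fun s => Real.exp ((c - 2 * lam) * s))
        (Real.exp ((c - 2 * lam) * t) * (c - 2 * lam)) t := by
      simpa using ((hasDerivAt_id t).const_mul (c - 2 * lam)).exp
    exact (h1.mul (hV t).hasDerivAt).sub (h2.const_mul D)
  have hderiv' : ∀ t : ℝ, deriv f t =
      Real.exp (c * t) * c * V t + Real.exp (c * t) * deriv V t
        - D * (Real.exp ((c - 2 * lam) * t) * (c - 2 * lam)) := fun t => (hderiv t).deriv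
  have hanti : AntitoneOn f (Set.Ici (0 : ℝ)) := by
    apply antitoneOn_of_deriv_nonpos (convex_Ici 0)
    · exact fun t _ => ((hderiv t).continuousAt).continuousWithinAt
    · exact fun t _ => (hderiv t).differentiableAt.differentiableWithinAt
    · intro t ht
      rw [interior_Ici] at ht
      show deriv f t ≤ 0
      rw [hderiv' t]
      have h1 := hlin t (le_of_lt ht)
      have h2 : Real.exp (c * t) * deriv V t ≤
          Real.exp (c * t) * (-c * V t + C * Real.exp (-(2 * lam) * t)) :=
        mul_le_mul_of_nonneg_left h1 (Real.exp_pos _).le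
      have h3 : Real.exp (c * t) * Real.exp (-(2 * lam) * t) = Real.exp ((c - 2 * lam) * t) := by
        rw [← Real.exp_add]; congr 1; ring
      have h2' : Real.exp (c * t) * deriv V t ≤
          -(c * (Real.exp (c * t) * V t)) + C * Real.exp ((c - 2 * lam) * t) := by
        have e : Real.exp (c * t) * (-c * V t + C * Real.exp (-(2 * lam) * t)) =
            -(c * (Real.exp (c * t) * V t)) +
              C * (Real.exp (c * t) * Real.exp (-(2 * lam) * t)) := by ring
        rw [e, h3] at h2; exact h2
      have h4 : D * (Real.exp ((c - 2 * lam) * t) * (c - 2 * lam)) =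
          C * Real.exp ((c - 2 * lam) * t) := by
        rw [hD]; field_simp
      rw [h4]
      nlinarith [h2']
  -- the explicit bound
  have hbound : ∀ t : ℝ, 0 ≤ t →
      V t ≤ (V 0 - D) * Real.exp (-c * t) + D * Real.exp (-(2 * lam) * t) := by
    intro t ht
    have hft := hanti (Set.self_mem_Ici) (Set.mem_Ici.mpr ht) ht
    simp only [hf, mul_zero, Real.exp_zero, one_mul, mul_one] at hft
    have key : Real.exp (c * t) * V t ≤ (V 0 - D) + D * Real.exp ((c - 2 * lam) * t) := by
      linarith
    have e1 : Real.exp (-c * t) * Real.exp (c * t) = 1 := by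
      rw [← Real.exp_add]; simp
    have e2 : Real.exp (-c * t) * Real.exp ((c - 2 * lam) * t) = Real.exp (-(2 * lam) * t) := by
      rw [← Real.exp_add]; congr 1; ring
    calc V t = Real.exp (-c * t) * (Real.exp (c * t) * V t) := by
          rw [← mul_assoc, e1, one_mul]
      _ ≤ Real.exp (-c * t) * ((V 0 - D) + D * Real.exp ((c - 2 * lam) * t)) :=
          mul_le_mul_of_nonneg_left key (Real.exp_pos _).le
      _ = (V 0 - D) * Real.exp (-c * t) + D * Real.exp (-(2 * lam) * t) := by
          rw [← e2]; ring
  -- squeeze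
  have l1 : Tendsto (fun t : ℝ => Real.exp (-c * t)) atTop (nhds 0) := by
    have hm : Tendsto (fun t : ℝ => c * t) atTop atTop := tendsto_id.const_mul_atTop hcpos
    exact (Real.tendsto_exp_neg_atTop_nhds_zero.comp hm).congr fun t => by simp [Function.comp, neg_mul]
  have l2 : Tendsto (fun t : ℝ => Real.exp (-(2 * lam) * t)) atTop (nhds 0) := by
    have hm : Tendsto (fun t : ℝ => 2 * lam * t) atTop atTop :=
      tendsto_id.const_mul_atTop (by positivity)
    exact (Real.tendsto_exp_neg_atTop_nhds_zero.comp hm).congr fun t => by simp [Function.comp, neg_mul]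
  have hlim : Tendsto (fun t => (V 0 - D) * Real.exp (-c * t) + D * Real.exp (-(2 * lam) * t))
      atTop (nhds 0) := by
    have := (l1.const_mul (V 0 - D)).add (l2.const_mul D)
    simpa using this
  refine squeeze_zero' (Eventually.of_forall hVnonneg) ?_ hlim
  filter_upwards [eventually_ge_atTop (0 : ℝ)] with t ht using hbound t ht
end

section
/- Let D : (finite subsets S of a set V containing a fixed depot-adjacent structure) × V → ℝ be defined by the recursion D[S, j] = min over v ∈ S \ {j} of (D[S \ {j}, v] + c(v,j)·W̄(S \ {j})), with base case D[{j}, j] = c(0,j)·W̄(∅), where W̄(S) = Σ_{u ∈ V} R(u) − Σ_{u ∈ S} R(u) and R(u) ≥ 0. Then D[S, j] equals the minimum over all orderings (v₁,…,v_k) of S with v_k = j of Σ_{i=1}^{k} c(v_{i−1}, v_i)·(total weight of spills not among v₁,…,v_{i−1}), i.e., the minimum cumulative weighted latency of any route visiting exactly S and ending at j. -/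
open Finset

/-- Weighted latency accumulated by a route: continuing from vertex `prev` after having
already serviced the spills in `visited`, each traversed edge cost is weighted by the
total remaining (yet-unserviced) risk weight `total - ∑_{u ∈ visited} R u`. -/
def routeLatencyAux {V : Type*} [DecidableEq V] (c : V → V → ℝ) (R : V → ℝ)
    (total : ℝ) : V → Finset V → List V → ℝ
  | _, _, [] => 0
  | prev, visited, v :: rest =>
      c prev v * (total - ∑ u ∈ visited, R u) +
        routeLatencyAux c R total v (insert v visited) rest

lemma routeLatencyAux_append {V : Type*} [DecidableEq V] (c : V → V → ℝ) (R : V → ℝ)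
    (total : ℝ) (j : V) :
    ∀ (l : List V) (prev : V) (vis : Finset V),
      routeLatencyAux c R total prev vis (l ++ [j]) =
        routeLatencyAux c R total prev vis l +
          c (l.getLastD prev) j * (total - ∑ u ∈ vis ∪ l.toFinset, R u)
  | [], prev, vis => by simp [routeLatencyAux]
  | v :: rest, prev, vis => by
      rw [List.cons_append]
      simp only [routeLatencyAux,
        routeLatencyAux_append c R total j rest v (insert v vis)]
      have h : insert v vis ∪ rest.toFinset = vis ∪ (v :: rest).toFinset := by
        simp [List.toFinset_cons, Finset.insert_union, Finset.union_insert]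
      rw [h, List.getLastD_cons]
      ring

/-- Correctness of the subset dynamic program for minimum weighted latency:
if `D` satisfies the base case `D {j} j = c d j · W̄(∅)` and the recursion
`D S j = min over v ∈ S \ {j} of (D (S \ {j}) v + c v j · W̄(S \ {j}))`
(with `W̄ S = ∑_{u ∈ V} R u − ∑_{u ∈ S} R u`), then `D S j` is the minimum cumulative
weighted latency over all routes starting at the depot `d`, visiting exactly the spills
of `S`, and ending at `j`. -/
theorem dp_min_weighted_latency {V : Type*} [Fintype V] [DecidableEq V]
    (d : V) (c : V → V → ℝ) (R : V → ℝ)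
    (hc : ∀ u v : V, 0 ≤ c u v) (hR : ∀ u : V, 0 ≤ R u) (hRd : R d = 0)
    (total : ℝ) (htotal : total = ∑ u : V, R u)
    (D : Finset V → V → ℝ)
    (hbase : ∀ j : V, j ≠ d → D {j} j = c d j * total)
    (hrec : ∀ S : Finset V, ∀ j ∈ S, d ∉ S → 2 ≤ S.card →
      IsLeast {x : ℝ | ∃ v ∈ S.erase j,
          x = D (S.erase j) v + c v j * (total - ∑ u ∈ S.erase j, R u)} (D S j)) :
    ∀ S : Finset V, ∀ j ∈ S, d ∉ S →
      IsLeast {x : ℝ | ∃ l : List V, l.Nodup ∧ l.toFinset = S ∧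
          l.getLast? = some j ∧ routeLatencyAux c R total d ∅ l = x} (D S j) := by
  intro S
  induction S using Finset.strongInduction with
  | _ S ih =>
    intro j hj hd
    -- decomposition fact for any route in the set
    have decomp : ∀ l : List V, l.Nodup → l.toFinset = S → l.getLast? = some j →
        ∃ l' : List V, l = l' ++ [j] ∧ l'.Nodup ∧ l'.toFinset = S.erase j ∧ j ∉ l' := by
      intro l hnd hts hlast
      have hne : l ≠ [] := by rintro rfl; simp at hlast
      have hgl : l.getLast hne = j := by
        rw [List.getLast?_eq_getLast hne] at hlast
        exact Option.some_injective _ hlast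
      refine ⟨l.dropLast, ?_, ?_, ?_, ?_⟩
      · rw [← hgl]; exact (List.dropLast_append_getLast hne).symm
      · exact hnd.sublist (List.dropLast_sublist l)
      · have hl : l = l.dropLast ++ [j] := by
          rw [← hgl]; exact (List.dropLast_append_getLast hne).symm
        have hjnot : j ∉ l.dropLast := by
          intro hmem
          have := hnd
          rw [hl] at this
          simp [List.nodup_append] at this
          exact this.2 j hmem rfl
        have : S = insert j l.dropLast.toFinset := by
          rw [← hts, hl]; ext x; simp [or_comm]
        rw [this, Finset.erase_insert (by simpa using hjnot)]
      · intro hmem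
        have hl : l = l.dropLast ++ [j] := by
          rw [← hgl]; exact (List.dropLast_append_getLast hne).symm
        have := hnd; rw [hl] at this
        simp [List.nodup_append] at this
        exact this.2 j hmem rfl
    rcases eq_or_lt_of_le (Finset.one_le_card.mpr ⟨j, hj⟩) with h1 | h2
    · -- card = 1, S = {j}
      have hS : S = {j} := by
        rcases Finset.card_eq_one.mp h1.symm with ⟨a, ha⟩
        rw [ha] at hj ⊢
        rw [Finset.mem_singleton] at hj; rw [hj]
      subst hS
      have hjd : j ≠ d := by rintro rfl; exact hd hj
      constructor
      · exact ⟨[j], by simp, by simp, by simp, by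
          simp [routeLatencyAux, hbase j hjd]⟩
      · rintro x ⟨l, hnd, hts, hlast, rfl⟩
        obtain ⟨l', rfl, hnd', hts', hjn⟩ := decomp l hnd hts hlast
        have : l' = [] := by
          rw [Finset.erase_singleton] at hts'
          exact List.toFinset_eq_empty_iff l' |>.mp hts'
        subst this
        simp [routeLatencyAux, hbase j hjd]
    · -- card ≥ 2
      obtain ⟨⟨v, hv, hDeq⟩, hlb⟩ := hrec S j hj hd h2
      have hdE : d ∉ S.erase j := fun h => hd (Finset.mem_of_mem_erase h)
      have ihv := ih (S.erase j) (Finset.erase_ssubset hj) v hv hdE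
      constructor
      · obtain ⟨⟨l', hnd', hts', hlast', hlat'⟩, _⟩ := ihv
        refine ⟨l' ++ [j], ?_, ?_, ?_, ?_⟩
        · have hjn : j ∉ l' := by
            rw [← List.mem_toFinset, hts']; exact Finset.notMem_erase j S
          simp [List.nodup_append, hnd', hjn]
          intro a ha h; exact hjn (h ▸ ha)
        · rw [List.toFinset_append, hts', Finset.union_comm]
          show insert j ∅ ∪ S.erase j = S
          rw [Finset.insert_union, Finset.empty_union, Finset.insert_erase hj]
        · simp
        · have hne' : l' ≠ [] := by rintro rfl; simp at hlast'
          have hgl' : l'.getLastD d = v := by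
            rw [List.getLastD_eq_getLast?, hlast']; rfl
          rw [routeLatencyAux_append, hlat', hgl', hts']
          rw [Finset.empty_union, hDeq]
      · rintro x ⟨l, hnd, hts, hlast, rfl⟩
        obtain ⟨l', rfl, hnd', hts', hjn⟩ := decomp l hnd hts hlast
        have hne' : l' ≠ [] := by
          rintro rfl
          have hc1 : (S.erase j).card = S.card - 1 := Finset.card_erase_of_mem hj
          have he : (S.erase j) = ∅ := by simp [← hts']
          rw [he, Finset.card_empty] at hc1
          omega
        set w := l'.getLast hne' with hw
        have hwmem : w ∈ S.erase j := by
          rw [← hts', List.mem_toFinset]; exact List.getLast_mem hne'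
        have hgl' : l'.getLastD d = w := by
          rw [List.getLastD_eq_getLast?, List.getLast?_eq_getLast hne']; rfl
        have hlast' : l'.getLast? = some w := List.getLast?_eq_getLast hne'
        rw [routeLatencyAux_append, hgl', hts', Finset.empty_union]
        have h1 := (ih (S.erase j) (Finset.erase_ssubset hj) w hwmem hdE).2
          ⟨l', hnd', hts', hlast', rfl⟩
        have h2' := hlb ⟨w, hwmem, rfl⟩
        have : D (S.erase j) w + c w j * (total - ∑ u ∈ S.erase j, R u) ≤
            routeLatencyAux c R total d ∅ l' + c w j * (total - ∑ u ∈ S.erase j, R u) := by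
          linarith
        linarith
end
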